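/- Assume α₂ = α₃ = λ_t = 0 and λ_d + λ_p·α₁ ≠ 0. Let φ be a constant tensor field and ρ > 0 with Σ_{b,c} φ_{abc}·φ_{a'bc} = N²·ρ·δ_{aa'} for all a,a', and assume the solution condition λ₂ + (λ_d + λ_p·α₁)·ρ = 0. Then: (1) H(φ)φ = −2λ₂·φ; (2) for any symmetric matrix S ∈ ℝ^{N×N} with trace zero, the tensor field χ_{abc} = Σ_{a'} S_{aa'}·φ_{a'bc} satisfies H(φ)χ = [−2λ₂·λ_p·α₁/(λ_p·α₁ + λ_d)]·χ. -/

import Mathlib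

open Finset

/-- The potential of the quartic `O(N)^3` tensor model. -/
noncomputable def potV (N : ℕ) (l2 ld lp lt a1 a2 a3 : ℝ)
    (φ : Fin N → Fin N → Fin N → ℝ) : ℝ :=
  l2 / 2 * (∑ a, ∑ b, ∑ c, (φ a b c) ^ 2)
  + ld / (4 * (N : ℝ) ^ 3) * (∑ a, ∑ b, ∑ c, (φ a b c) ^ 2) ^ 2
  + lp / (4 * (N : ℝ) ^ 2) *
      (a1 * ∑ a, ∑ b, ∑ c, ∑ a', ∑ b', ∑ c',
          φ a b c * φ a b' c' * φ a' b' c' * φ a' b c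
       + a2 * ∑ a, ∑ b, ∑ c, ∑ a', ∑ b', ∑ c',
          φ a b c * φ a' b c' * φ a' b' c' * φ a b' c
       + a3 * ∑ a, ∑ b, ∑ c, ∑ a', ∑ b', ∑ c',
          φ a b c * φ a' b' c * φ a' b' c' * φ a b c')
  + lt / (4 * (N : ℝ) ^ ((3 : ℝ) / 2)) *
      ∑ a, ∑ b, ∑ c, ∑ a', ∑ b', ∑ c',
        φ a b c * φ a b' c' * φ a' b c' * φ a' b' c

/-- The field equations of the quartic `O(N)^3` tensor model (vanishing gradient of `potV`). -/
def FieldEqs (N : ℕ) (l2 ld lp lt a1 a2 a3 : ℝ)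
    (φ : Fin N → Fin N → Fin N → ℝ) : Prop :=
  ∀ a b c,
    l2 * φ a b c
    + ld / (N : ℝ) ^ 3 * (∑ a', ∑ b', ∑ c', (φ a' b' c') ^ 2) * φ a b c
    + lp / (N : ℝ) ^ 2 *
        (a1 * ∑ a', ∑ b', ∑ c', φ a b' c' * φ a' b' c' * φ a' b c
         + a2 * ∑ a', ∑ b', ∑ c', φ a' b c' * φ a' b' c' * φ a b' c
         + a3 * ∑ a', ∑ b', ∑ c', φ a' b' c * φ a' b' c' * φ a b c')
    + lt / (N : ℝ) ^ ((3 : ℝ) / 2) *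
        ∑ a', ∑ b', ∑ c', φ a b' c' * φ a' b c' * φ a' b' c = 0

/-- The Hessian of `potV` at `φ` (the matrix of second partial derivatives
`H(φ)_{abc,a'b'c'} = ∂²V/∂φ_{abc}∂φ_{a'b'c'}`), acting on a tensor field `χ` by
`(H(φ)χ)_{abc} = Σ_{a'b'c'} H(φ)_{abc,a'b'c'} χ_{a'b'c'}`. -/
noncomputable def hessApply (N : ℕ) (l2 ld lp lt a1 a2 a3 : ℝ)
    (φ χ : Fin N → Fin N → Fin N → ℝ) : Fin N → Fin N → Fin N → ℝ :=
  fun a b c =>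
    deriv (fun s : ℝ =>
      deriv (fun t : ℝ =>
        potV N l2 ld lp lt a1 a2 a3
          (fun a' b' c' => φ a' b' c' + t * χ a' b' c'
            + s * (if a' = a ∧ b' = b ∧ c' = c then (1 : ℝ) else 0))) 0) 0


lemma hd_lin (a a' : ℝ) : HasDerivAt (fun t : ℝ => a + t * a') a' 0 := by
  simpa using ((hasDerivAt_id (0:ℝ)).mul_const a').const_add a

lemma hd_lin2 (a a' b b' : ℝ) :
    HasDerivAt (fun t : ℝ => (a + t * a') * (b + t * b')) (a' * b + a * b') 0 := by
  have h := (hd_lin a a').mul (hd_lin b b')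
  refine h.congr_deriv ?_
  ring

lemma hd_lin4 (a a' b b' c c' d d' : ℝ) :
    HasDerivAt (fun t : ℝ => (a + t * a') * (b + t * b') * (c + t * c') * (d + t * d'))
      (a' * b * c * d + a * b' * c * d + a * b * c' * d + a * b * c * d') 0 := by
  have h := (((hd_lin a a').mul (hd_lin b b')).mul (hd_lin c c')).mul (hd_lin d d')
  refine h.congr_deriv ?_
  simp only [Pi.mul_apply]
  ring

def dotT (N : ℕ) (u v : Fin N → Fin N → Fin N → ℝ) : ℝ :=
  ∑ a, ∑ b, ∑ c, u a b c * v a b c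

def quadT (N : ℕ) (w x y z : Fin N → Fin N → Fin N → ℝ) : ℝ :=
  ∑ a, ∑ b, ∑ c, ∑ a', ∑ b', ∑ c', w a b c * x a b' c' * y a' b' c' * z a' b c

lemma sum_rot3 {M : Type*} [AddCommMonoid M] {n : ℕ} (f : Fin n → Fin n → Fin n → M) :
    ∑ b, ∑ c, ∑ a, f b c a = ∑ a, ∑ b, ∑ c, f b c a := by
  calc ∑ b, ∑ c, ∑ a, f b c a = ∑ b, ∑ a, ∑ c, f b c a :=
        Finset.sum_congr rfl fun b _ => Finset.sum_comm
    _ = ∑ a, ∑ b, ∑ c, f b c a := Finset.sum_comm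

lemma sum_swap22 {M : Type*} [AddCommMonoid M] {n : ℕ} (f : Fin n → Fin n → Fin n → Fin n → M) :
    ∑ b, ∑ c, ∑ d, ∑ e, f b c d e = ∑ d, ∑ e, ∑ b, ∑ c, f b c d e := by
  calc ∑ b, ∑ c, ∑ d, ∑ e, f b c d e = ∑ d, ∑ b, ∑ c, ∑ e, f b c d e :=
        sum_rot3 (fun b c d => ∑ e, f b c d e)
    _ = ∑ d, ∑ e, ∑ b, ∑ c, f b c d e :=
        Finset.sum_congr rfl fun d _ => sum_rot3 (fun b c e => f b c d e)

lemma quadT_eq (N : ℕ) (w x y z : Fin N → Fin N → Fin N → ℝ) :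
    quadT N w x y z = ∑ a, ∑ a', (∑ b, ∑ c, w a b c * z a' b c) *
      (∑ b', ∑ c', x a b' c' * y a' b' c') := by
  simp only [quadT, Finset.sum_mul, Finset.mul_sum]
  refine Finset.sum_congr rfl fun a _ => ?_
  rw [sum_rot3 (fun b c a' => ∑ b', ∑ c', w a b c * x a b' c' * y a' b' c' * z a' b c)]
  refine Finset.sum_congr rfl fun a' _ => ?_
  rw [sum_swap22 (fun b c b' c' => w a b c * x a b' c' * y a' b' c' * z a' b c)]
  refine Finset.sum_congr rfl fun b' _ => Finset.sum_congr rfl fun c' _ =>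
    Finset.sum_congr rfl fun b _ => Finset.sum_congr rfl fun c _ => by ring


lemma hd_dot (N : ℕ) (u u' v v' : Fin N → Fin N → Fin N → ℝ) :
    HasDerivAt (fun s : ℝ => dotT N (fun a b c => u a b c + s * u' a b c)
        (fun a b c => v a b c + s * v' a b c))
      (dotT N u' v + dotT N u v') 0 := by
  have h : HasDerivAt (fun s : ℝ => ∑ a, ∑ b, ∑ c,
        (u a b c + s * u' a b c) * (v a b c + s * v' a b c))
      (∑ a, ∑ b, ∑ c, (u' a b c * v a b c + u a b c * v' a b c)) 0 :=
    HasDerivAt.fun_sum fun a _ => HasDerivAt.fun_sum fun b _ => HasDerivAt.fun_sum fun c _ =>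
      hd_lin2 _ _ _ _
  simpa [dotT, Finset.sum_add_distrib] using h

set_option maxHeartbeats 1000000 in
lemma hd_quad (N : ℕ) (w w' x x' y y' z z' : Fin N → Fin N → Fin N → ℝ) :
    HasDerivAt (fun s : ℝ => quadT N (fun a b c => w a b c + s * w' a b c)
        (fun a b c => x a b c + s * x' a b c)
        (fun a b c => y a b c + s * y' a b c)
        (fun a b c => z a b c + s * z' a b c))
      (quadT N w' x y z + quadT N w x' y z + quadT N w x y' z + quadT N w x y z') 0 := by
  have h : HasDerivAt (fun s : ℝ => ∑ a, ∑ b, ∑ c, ∑ a', ∑ b', ∑ c',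
        (w a b c + s * w' a b c) * (x a b' c' + s * x' a b' c')
          * (y a' b' c' + s * y' a' b' c') * (z a' b c + s * z' a' b c))
      (∑ a, ∑ b, ∑ c, ∑ a', ∑ b', ∑ c',
        (w' a b c * x a b' c' * y a' b' c' * z a' b c
         + w a b c * x' a b' c' * y a' b' c' * z a' b c
         + w a b c * x a b' c' * y' a' b' c' * z a' b c
         + w a b c * x a b' c' * y a' b' c' * z' a' b c)) 0 :=
    HasDerivAt.fun_sum fun a _ => HasDerivAt.fun_sum fun b _ => HasDerivAt.fun_sum fun c _ =>
      HasDerivAt.fun_sum fun a' _ => HasDerivAt.fun_sum fun b' _ => HasDerivAt.fun_sum fun c' _ =>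
        hd_lin4 _ _ _ _ _ _ _ _
  simpa [quadT, Finset.sum_add_distrib] using h

lemma potV_zero (N : ℕ) (l2 ld lp a1 : ℝ) (ψ : Fin N → Fin N → Fin N → ℝ) :
    potV N l2 ld lp 0 a1 0 0 ψ
      = l2 / 2 * dotT N ψ ψ + ld / (4 * (N : ℝ) ^ 3) * (dotT N ψ ψ) ^ 2
        + lp * a1 / (4 * (N : ℝ) ^ 2) * quadT N ψ ψ ψ ψ := by
  simp only [potV, dotT, quadT, pow_two]
  ring

set_option maxHeartbeats 1000000 in
lemma hd_V (N : ℕ) (l2 ld lp a1 : ℝ) (u v : Fin N → Fin N → Fin N → ℝ) :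
    HasDerivAt (fun t : ℝ => potV N l2 ld lp 0 a1 0 0
        (fun a b c => u a b c + t * v a b c))
      (l2 / 2 * (dotT N v u + dotT N u v)
       + ld / (4 * (N : ℝ) ^ 3) * (2 * dotT N u u * (dotT N v u + dotT N u v))
       + lp * a1 / (4 * (N : ℝ) ^ 2) *
          (quadT N v u u u + quadT N u v u u + quadT N u u v u + quadT N u u u v)) 0 := by
  simp only [potV_zero]
  have hQ := hd_dot N u v u v
  have h1 := hQ.const_mul (l2 / 2)
  have h2 := (hQ.pow 2).const_mul (ld / (4 * (N : ℝ) ^ 3))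
  have h3 := (hd_quad N u v u v u v u v).const_mul (lp * a1 / (4 * (N : ℝ) ^ 2))
  have h := (h1.add h2).add h3
  refine h.congr_deriv ?_
  simp only [zero_mul, add_zero]
  ring

lemma dotT_zero_left (N : ℕ) (v : Fin N → Fin N → Fin N → ℝ) :
    dotT N (fun _ _ _ => (0:ℝ)) v = 0 := by simp [dotT]

lemma dotT_zero_right (N : ℕ) (v : Fin N → Fin N → Fin N → ℝ) :
    dotT N v (fun _ _ _ => (0:ℝ)) = 0 := by simp [dotT]

lemma quadT_zero₁ (N : ℕ) (x y z : Fin N → Fin N → Fin N → ℝ) :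
    quadT N (fun _ _ _ => (0:ℝ)) x y z = 0 := by simp [quadT]
lemma quadT_zero₂ (N : ℕ) (x y z : Fin N → Fin N → Fin N → ℝ) :
    quadT N x (fun _ _ _ => (0:ℝ)) y z = 0 := by simp [quadT]
lemma quadT_zero₃ (N : ℕ) (x y z : Fin N → Fin N → Fin N → ℝ) :
    quadT N x y (fun _ _ _ => (0:ℝ)) z = 0 := by simp [quadT]
lemma quadT_zero₄ (N : ℕ) (x y z : Fin N → Fin N → Fin N → ℝ) :
    quadT N x y z (fun _ _ _ => (0:ℝ)) = 0 := by simp [quadT]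

set_option maxHeartbeats 2000000 in
lemma hess_formula (N : ℕ) (l2 ld lp a1 : ℝ) (φ χ : Fin N → Fin N → Fin N → ℝ)
    (a b c : Fin N) :
    hessApply N l2 ld lp 0 a1 0 0 φ χ a b c =
      (fun E : Fin N → Fin N → Fin N → ℝ =>
        l2 / 2 * (dotT N χ E + dotT N E χ)
        + ld / (4 * (N : ℝ) ^ 3) *
            (2 * (dotT N E φ + dotT N φ E) * (dotT N χ φ + dotT N φ χ)
             + 2 * dotT N φ φ * (dotT N χ E + dotT N E χ))
        + lp * a1 / (4 * (N : ℝ) ^ 2) *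
            ((quadT N χ E φ φ + quadT N χ φ E φ + quadT N χ φ φ E)
             + (quadT N E χ φ φ + quadT N φ χ E φ + quadT N φ χ φ E)
             + (quadT N E φ χ φ + quadT N φ E χ φ + quadT N φ φ χ E)
             + (quadT N E φ φ χ + quadT N φ E φ χ + quadT N φ φ E χ)))
      (fun a' b' c' => if a' = a ∧ b' = b ∧ c' = c then (1 : ℝ) else 0) := by
  set E : Fin N → Fin N → Fin N → ℝ :=
    fun a' b' c' => if a' = a ∧ b' = b ∧ c' = c then (1 : ℝ) else 0 with hE
  have e1 : (fun s : ℝ => deriv (fun t : ℝ =>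
      potV N l2 ld lp 0 a1 0 0
        (fun a' b' c' => φ a' b' c' + t * χ a' b' c' + s * E a' b' c')) 0)
      = fun s : ℝ =>
        (l2 / 2 * (dotT N χ (fun a' b' c' => φ a' b' c' + s * E a' b' c')
            + dotT N (fun a' b' c' => φ a' b' c' + s * E a' b' c') χ)
         + ld / (4 * (N : ℝ) ^ 3) *
            (2 * dotT N (fun a' b' c' => φ a' b' c' + s * E a' b' c')
                (fun a' b' c' => φ a' b' c' + s * E a' b' c')
              * (dotT N χ (fun a' b' c' => φ a' b' c' + s * E a' b' c')
                 + dotT N (fun a' b' c' => φ a' b' c' + s * E a' b' c') χ))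
         + lp * a1 / (4 * (N : ℝ) ^ 2) *
            (quadT N χ (fun a' b' c' => φ a' b' c' + s * E a' b' c')
                (fun a' b' c' => φ a' b' c' + s * E a' b' c')
                (fun a' b' c' => φ a' b' c' + s * E a' b' c')
             + quadT N (fun a' b' c' => φ a' b' c' + s * E a' b' c') χ
                (fun a' b' c' => φ a' b' c' + s * E a' b' c')
                (fun a' b' c' => φ a' b' c' + s * E a' b' c')
             + quadT N (fun a' b' c' => φ a' b' c' + s * E a' b' c')
                (fun a' b' c' => φ a' b' c' + s * E a' b' c') χ
                (fun a' b' c' => φ a' b' c' + s * E a' b' c')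
             + quadT N (fun a' b' c' => φ a' b' c' + s * E a' b' c')
                (fun a' b' c' => φ a' b' c' + s * E a' b' c')
                (fun a' b' c' => φ a' b' c' + s * E a' b' c') χ)) := by
    funext s
    have e2 : (fun t : ℝ => potV N l2 ld lp 0 a1 0 0
        (fun a' b' c' => φ a' b' c' + t * χ a' b' c' + s * E a' b' c'))
        = fun t : ℝ => potV N l2 ld lp 0 a1 0 0
            (fun a' b' c' => (φ a' b' c' + s * E a' b' c') + t * χ a' b' c') := by
      funext t; congr 1; funext a' b' c'; ring
    rw [e2]
    exact (hd_V N l2 ld lp a1 (fun a' b' c' => φ a' b' c' + s * E a' b' c') χ).deriv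
  show deriv _ 0 = _
  rw [e1]
  have z3 : ∀ x : Fin N → Fin N → Fin N → ℝ,
      x = fun a' b' c' => x a' b' c' + (0:ℝ) * (0:ℝ) := by intro x; funext; ring
  -- derivatives of the building blocks
  have hA : HasDerivAt (fun s : ℝ => dotT N χ (fun a' b' c' => φ a' b' c' + s * E a' b' c'))
      (dotT N χ E) 0 := by
    simpa [dotT_zero_left] using hd_dot N χ (fun _ _ _ => 0) φ E
  have hB : HasDerivAt (fun s : ℝ => dotT N (fun a' b' c' => φ a' b' c' + s * E a' b' c') χ)
      (dotT N E χ) 0 := by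
    simpa [dotT_zero_right] using hd_dot N φ E χ (fun _ _ _ => 0)
  have hQ : HasDerivAt (fun s : ℝ => dotT N (fun a' b' c' => φ a' b' c' + s * E a' b' c')
      (fun a' b' c' => φ a' b' c' + s * E a' b' c')) (dotT N E φ + dotT N φ E) 0 :=
    hd_dot N φ E φ E
  have hP1 : HasDerivAt (fun s : ℝ => quadT N χ
        (fun a' b' c' => φ a' b' c' + s * E a' b' c')
        (fun a' b' c' => φ a' b' c' + s * E a' b' c')
        (fun a' b' c' => φ a' b' c' + s * E a' b' c'))
      (quadT N χ E φ φ + quadT N χ φ E φ + quadT N χ φ φ E) 0 := by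
    simpa [quadT_zero₁] using hd_quad N χ (fun _ _ _ => 0) φ E φ E φ E
  have hP2 : HasDerivAt (fun s : ℝ => quadT N
        (fun a' b' c' => φ a' b' c' + s * E a' b' c') χ
        (fun a' b' c' => φ a' b' c' + s * E a' b' c')
        (fun a' b' c' => φ a' b' c' + s * E a' b' c'))
      (quadT N E χ φ φ + quadT N φ χ E φ + quadT N φ χ φ E) 0 := by
    simpa [quadT_zero₂] using hd_quad N φ E χ (fun _ _ _ => 0) φ E φ E
  have hP3 : HasDerivAt (fun s : ℝ => quadT N
        (fun a' b' c' => φ a' b' c' + s * E a' b' c')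
        (fun a' b' c' => φ a' b' c' + s * E a' b' c') χ
        (fun a' b' c' => φ a' b' c' + s * E a' b' c'))
      (quadT N E φ χ φ + quadT N φ E χ φ + quadT N φ φ χ E) 0 := by
    simpa [quadT_zero₃] using hd_quad N φ E φ E χ (fun _ _ _ => 0) φ E
  have hP4 : HasDerivAt (fun s : ℝ => quadT N
        (fun a' b' c' => φ a' b' c' + s * E a' b' c')
        (fun a' b' c' => φ a' b' c' + s * E a' b' c')
        (fun a' b' c' => φ a' b' c' + s * E a' b' c') χ)
      (quadT N E φ φ χ + quadT N φ E φ χ + quadT N φ φ E χ) 0 := by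
    simpa [quadT_zero₄] using hd_quad N φ E φ E φ E χ (fun _ _ _ => 0)
  have h1 := (hA.add hB).const_mul (l2 / 2)
  have h2 := (((hQ.const_mul 2).mul (hA.add hB)).const_mul (ld / (4 * (N : ℝ) ^ 3)))
  have h3 := ((((hP1.add hP2).add hP3).add hP4).const_mul (lp * a1 / (4 * (N : ℝ) ^ 2)))
  have h := (h1.add h2).add h3
  refine h.deriv.trans ?_
  simp only [zero_mul, add_zero, Pi.add_apply]

lemma dotT_delta_right (N : ℕ) (a b c : Fin N) (v : Fin N → Fin N → Fin N → ℝ) :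
    dotT N v (fun a' b' c' => if a' = a ∧ b' = b ∧ c' = c then (1 : ℝ) else 0)
      = v a b c := by
  simp [dotT, ite_and, mul_ite, Finset.sum_ite_irrel, Finset.sum_ite_eq',
    Finset.sum_const_zero]

lemma dotT_delta_left (N : ℕ) (a b c : Fin N) (v : Fin N → Fin N → Fin N → ℝ) :
    dotT N (fun a' b' c' => if a' = a ∧ b' = b ∧ c' = c then (1 : ℝ) else 0) v
      = v a b c := by
  simp [dotT, ite_and, ite_mul, Finset.sum_ite_irrel, Finset.sum_ite_eq',
    Finset.sum_const_zero]

lemma pair_delta_left (N : ℕ) (a b c : Fin N) (v : Fin N → Fin N → Fin N → ℝ)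
    (a₁ a₂ : Fin N) :
    (∑ b', ∑ c', (if a₁ = a ∧ b' = b ∧ c' = c then (1 : ℝ) else 0) * v a₂ b' c')
      = if a₁ = a then v a₂ b c else 0 := by
  simp [ite_and, ite_mul, Finset.sum_ite_irrel, Finset.sum_ite_eq',
    Finset.sum_const_zero]

lemma pair_delta_right (N : ℕ) (a b c : Fin N) (v : Fin N → Fin N → Fin N → ℝ)
    (a₁ a₂ : Fin N) :
    (∑ b', ∑ c', v a₁ b' c' * (if a₂ = a ∧ b' = b ∧ c' = c then (1 : ℝ) else 0))
      = if a₂ = a then v a₁ b c else 0 := by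
  simp [ite_and, mul_ite, Finset.sum_ite_irrel, Finset.sum_ite_eq',
    Finset.sum_const_zero]

set_option maxHeartbeats 1000000 in
theorem part1 (N : ℕ) (hN : 1 ≤ N) (l2 ld lp a1 : ℝ)
    (φ : Fin N → Fin N → Fin N → ℝ) (ρ : ℝ)
    (horth : ∀ a a', ∑ b, ∑ c, φ a b c * φ a' b c
      = (N : ℝ) ^ 2 * ρ * (if a = a' then 1 else 0))
    (hsol : l2 + (ld + lp * a1) * ρ = 0) :
    hessApply N l2 ld lp 0 a1 0 0 φ φ = fun a b c => -2 * l2 * φ a b c := by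
  have hQφ : dotT N φ φ = (N : ℝ) ^ 3 * ρ := by
    simp [dotT, horth, Finset.sum_const, Fintype.card_fin]
    ring
  funext a b c
  rw [hess_formula]
  simp only [quadT_eq, dotT_delta_left, dotT_delta_right, hQφ, horth,
    pair_delta_left, pair_delta_right]
  simp only [mul_ite, ite_mul, mul_zero, zero_mul, mul_one, one_mul,
    Finset.sum_ite_irrel, Finset.sum_ite_eq, Finset.sum_ite_eq',
    Finset.mem_univ, if_true, Finset.sum_const_zero, add_zero, zero_add]
  have hNne : ((N:ℝ)) ≠ 0 := Nat.cast_ne_zero.mpr (by omega)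
  have hl2 : l2 = -((ld + lp * a1) * ρ) := by linarith
  rw [hl2]
  field_simp
  ring

set_option maxHeartbeats 1000000 in
theorem part2 (N : ℕ) (hN : 1 ≤ N) (l2 ld lp a1 : ℝ) (hD0 : ld + lp * a1 ≠ 0)
    (φ : Fin N → Fin N → Fin N → ℝ) (ρ : ℝ) (hρ : 0 < ρ)
    (horth : ∀ a a', ∑ b, ∑ c, φ a b c * φ a' b c
      = (N : ℝ) ^ 2 * ρ * (if a = a' then 1 else 0))
    (hsol : l2 + (ld + lp * a1) * ρ = 0)
    (S : Fin N → Fin N → ℝ) (hS : ∀ a a', S a a' = S a' a) (htr : (∑ a, S a a) = 0) :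
    hessApply N l2 ld lp 0 a1 0 0 φ (fun a b c => ∑ a', S a a' * φ a' b c)
      = fun a b c => -2 * l2 * lp * a1 / (lp * a1 + ld) * ∑ a', S a a' * φ a' b c := by
  have hNne : ((N:ℝ)) ≠ 0 := Nat.cast_ne_zero.mpr (by omega)
  have hQφ : dotT N φ φ = (N : ℝ) ^ 3 * ρ := by
    simp [dotT, horth, Finset.sum_const, Fintype.card_fin]
    ring
  have hφχ : ∀ a₁ a₂ : Fin N, (∑ b', ∑ c', φ a₁ b' c' * (∑ a', S a₂ a' * φ a' b' c'))
      = (N : ℝ) ^ 2 * ρ * S a₂ a₁ := by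
    intro a₁ a₂
    calc (∑ b', ∑ c', φ a₁ b' c' * (∑ a', S a₂ a' * φ a' b' c'))
        = ∑ b', ∑ c', ∑ a', S a₂ a' * (φ a₁ b' c' * φ a' b' c') := by
          refine Finset.sum_congr rfl fun b' _ => Finset.sum_congr rfl fun c' _ => ?_
          rw [Finset.mul_sum]
          exact Finset.sum_congr rfl fun a' _ => by ring
      _ = ∑ a', ∑ b', ∑ c', S a₂ a' * (φ a₁ b' c' * φ a' b' c') :=
          sum_rot3 (fun b' c' a' => S a₂ a' * (φ a₁ b' c' * φ a' b' c'))
      _ = ∑ a', S a₂ a' * ((N : ℝ) ^ 2 * ρ * if a₁ = a' then 1 else 0) := by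
          refine Finset.sum_congr rfl fun a' _ => ?_
          rw [← horth a₁ a', Finset.mul_sum]
          exact Finset.sum_congr rfl fun b' _ => (Finset.mul_sum _ _ _).symm
      _ = (N : ℝ) ^ 2 * ρ * S a₂ a₁ := by
          simp [mul_ite, Finset.sum_ite_eq]
          ring
  have hχφ : ∀ a₁ a₂ : Fin N, (∑ b', ∑ c', (∑ a', S a₁ a' * φ a' b' c') * φ a₂ b' c')
      = (N : ℝ) ^ 2 * ρ * S a₁ a₂ := by
    intro a₁ a₂
    rw [← hφχ a₂ a₁]
    exact Finset.sum_congr rfl fun _ _ => Finset.sum_congr rfl fun _ _ => mul_comm _ _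
  have hdφχ : dotT N φ (fun a b c => ∑ a', S a a' * φ a' b c) = 0 := by
    simp only [dotT]
    rw [Finset.sum_congr rfl (fun a _ => hφχ a a), ← Finset.mul_sum, htr, mul_zero]
  have hdχφ : dotT N (fun a b c => ∑ a', S a a' * φ a' b c) φ = 0 := by
    simp only [dotT]
    rw [Finset.sum_congr rfl (fun a _ => hχφ a a), ← Finset.mul_sum, htr, mul_zero]
  funext a b c
  have pdl : ∀ a₁ a₂ : Fin N, (∑ b', ∑ c',
      (if a₁ = a ∧ b' = b ∧ c' = c then (1:ℝ) else 0) * (∑ a', S a₂ a' * φ a' b' c'))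
      = if a₁ = a then (∑ a', S a₂ a' * φ a' b c) else 0 :=
    fun a₁ a₂ => pair_delta_left N a b c (fun p q r => ∑ a', S p a' * φ a' q r) a₁ a₂
  have pdr : ∀ a₁ a₂ : Fin N, (∑ b', ∑ c',
      (∑ a', S a₁ a' * φ a' b' c') * (if a₂ = a ∧ b' = b ∧ c' = c then (1:ℝ) else 0))
      = if a₂ = a then (∑ a', S a₁ a' * φ a' b c) else 0 :=
    fun a₁ a₂ => pair_delta_right N a b c (fun p q r => ∑ a', S p a' * φ a' q r) a₁ a₂
  rw [hess_formula]
  simp only [quadT_eq, dotT_delta_left, dotT_delta_right, hQφ, hdφχ, hdχφ, horth,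
    hφχ, hχφ, pdl, pdr, pair_delta_left, pair_delta_right]
  simp only [mul_ite, ite_mul, mul_zero, zero_mul, mul_one, one_mul,
    Finset.sum_ite_irrel, Finset.sum_ite_eq, Finset.sum_ite_eq',
    Finset.mem_univ, if_true, Finset.sum_const_zero, add_zero, zero_add]
  have hSa : ∀ x, S x a = S a x := fun x => hS x a
  simp only [hSa]
  have pull1 : ∀ k : ℝ, (∑ x, k * S a x * φ x b c) = k * ∑ a', S a a' * φ a' b c :=
    fun k => by rw [Finset.mul_sum]; exact Finset.sum_congr rfl fun x _ => by ring
  have pull2 : ∀ k : ℝ, (∑ x, φ x b c * (k * S a x)) = k * ∑ a', S a a' * φ a' b c :=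
    fun k => by rw [Finset.mul_sum]; exact Finset.sum_congr rfl fun x _ => by ring
  have pull3 : ∀ k : ℝ, (∑ _x : Fin N, (∑ a', S a a' * φ a' b c) * k) = (N:ℝ) * k * ∑ a', S a a' * φ a' b c := by
    intro k
    rw [Finset.sum_const, Finset.card_univ, Fintype.card_fin, nsmul_eq_mul]
    ring
  simp only [pull1, pull2]
  have hD0' : lp * a1 + ld ≠ 0 := fun h => hD0 (by linarith)
  have hl2 : l2 = -((ld + lp * a1) * ρ) := by linarith
  rw [hl2]
  field_simp
  ring

/-- For `α₂ = α₃ = λ_t = 0`, at a solution with orthogonal slices of common squared norm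
`N²ρ`: (1) `H(φ)φ = -2λ₂ φ`; (2) for symmetric traceless `S`, the tensor
`χ_{abc} = Σ_{a'} S_{aa'} φ_{a'bc}` satisfies `H(φ)χ = [-2λ₂λ_pα₁/(λ_pα₁+λ_d)] χ`. -/
theorem orthogonal_slices_hessian (N : ℕ) (hN : 1 ≤ N)
    (l2 ld lp lt a1 a2 a3 : ℝ)
    (ha2 : a2 = 0) (ha3 : a3 = 0) (hlt : lt = 0) (hD0 : ld + lp * a1 ≠ 0)
    (φ : Fin N → Fin N → Fin N → ℝ) (ρ : ℝ) (hρ : 0 < ρ)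
    (horth : ∀ a a', ∑ b, ∑ c, φ a b c * φ a' b c
      = (N : ℝ) ^ 2 * ρ * (if a = a' then 1 else 0))
    (hsol : l2 + (ld + lp * a1) * ρ = 0) :
    (hessApply N l2 ld lp lt a1 a2 a3 φ φ = fun a b c => -2 * l2 * φ a b c)
    ∧ (∀ S : Fin N → Fin N → ℝ, (∀ a a', S a a' = S a' a) → (∑ a, S a a) = 0 →
        hessApply N l2 ld lp lt a1 a2 a3 φ (fun a b c => ∑ a', S a a' * φ a' b c)
          = fun a b c =>
            -2 * l2 * lp * a1 / (lp * a1 + ld) * ∑ a', S a a' * φ a' b c) := by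
  subst ha2 ha3 hlt
  exact ⟨part1 N hN l2 ld lp a1 φ ρ horth hsol,
    fun S hS htr => part2 N hN l2 ld lp a1 hD0 φ ρ hρ horth hsol S hS htr⟩
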